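/- The multiplication map m ⊗_O m → m is an isomorphism of O-modules. -/

import Mathlib

/-!
`O` is the valuation ring of the `p`-adic completion of an algebraic closure of `ℚ_p`,
encoded abstractly as a valuation ring (local domain) whose maximal ideal `m` is idempotent
(`m² = m`) and flat.  The statement: the multiplication map `m ⊗_O m → m` is an isomorphism
of `O`-modules.
-/

universe u

open IsLocalRing TensorProduct

/-- The multiplication map `m ⊗_O m → m`, induced by the bilinear map `(x, y) ↦ x • y`. -/
noncomputable def mulMap (O : Type u) [CommRing O] (m : Ideal O) :
    (m ⊗[O] m) →ₗ[O] m :=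
  TensorProduct.lift ((LinearMap.lsmul O m).comp m.subtype)

theorem mulMap_bijective
    (O : Type u) [CommRing O] [IsDomain O] [ValuationRing O]
    (hflat : Module.Flat O (maximalIdeal O))
    (hidem : maximalIdeal O * maximalIdeal O = maximalIdeal O) :
    Function.Bijective (mulMap O (maximalIdeal O)) := by
  set m := maximalIdeal O
  constructor
  · -- injectivity from flatness
    have h1 : mulMap O m =
        (TensorProduct.lid O m).toLinearMap.comp
          (LinearMap.rTensor (m : Submodule O O) m.subtype) := by
      rw [LinearMap.lid_comp_rTensor]
      rfl
    rw [h1]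
    exact (TensorProduct.lid O m).injective.comp
      (Module.Flat.iff_rTensor_injective'.mp hflat m)
  · -- surjectivity from idempotency
    intro y
    have hy : (y : O) ∈ m * m := by rw [hidem]; exact y.2
    have key : ∀ a (ha : a ∈ m * m), ∃ z, mulMap O m z = ⟨a, hidem ▸ ha⟩ := by
      intro a ha
      refine Submodule.mul_induction_on' (C := fun r hr => ∃ z, mulMap O m z = ⟨r, hidem ▸ hr⟩)
        ?_ ?_ ha
      · intro x hx y' hy'
        exact ⟨(⟨x, hx⟩ : m) ⊗ₜ[O] (⟨y', hy'⟩ : m), rfl⟩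
      · rintro x hx y' hy' ⟨z1, hz1⟩ ⟨z2, hz2⟩
        refine ⟨z1 + z2, ?_⟩
        rw [map_add, hz1, hz2]
        rfl
    obtain ⟨z, hz⟩ := key y hy
    exact ⟨z, by rw [hz]⟩
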